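/- If (x,y,z,w,q) solves the five-dimensional system with y - wq = e^{-t}, then under the change of variables q₁ = w, p₁ = x, q₂ = e^t q, p₂ = z e^{-t}, s = e^{-t}, the functions (q₁,p₁,q₂,p₂) satisfy the Hamiltonian system dq₁/ds = ∂H/∂p₁, dp₁/ds = -∂H/∂q₁, dq₂/ds = ∂H/∂p₂, dp₂/ds = -∂H/∂q₂ with H = -(q₁²p₁² - 2α₂q₁p₁ - q₁)/(2s) - (q₂²p₂² + 2(α₁+α₂)q₂p₂ + ηsq₂)/(2s) - p₁p₂/s. -/

import Mathlib

open Complex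

/-- Under `q₁ = w, p₁ = x, q₂ = eᵗq, p₂ = ze⁻ᵗ, s = e⁻ᵗ`, the five-dimensional system
with the constraint `y - wq = e⁻ᵗ` becomes the Hamiltonian system with
`H = -(q₁²p₁² - 2α₂q₁p₁ - q₁)/(2s) - (q₂²p₂² + 2(α₁+α₂)q₂p₂ + ηsq₂)/(2s) - p₁p₂/s`.
Since `ds/dt = -s`, the equation `dQ/ds = F` reads `dQ/dt = (-s)·F`. -/
theorem stmt_14 (α₀ α₁ α₂ η : ℂ) (hα : α₀ + α₁ + α₂ = 1)
    (x y z w q : ℝ → ℂ)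
    (hx : ∀ t, HasDerivAt x (-(x t * w t - α₂) * x t + 1/2) t)
    (hy : ∀ t, HasDerivAt y ((x t * w t + z t * q t - 1) * y t + α₁ * w t * q t) t)
    (hz : ∀ t, HasDerivAt z (-(z t * q t - α₀) * z t - η/2) t)
    (hw : ∀ t, HasDerivAt w ((x t * w t - z t * q t - α₂) * w t + y t * z t) t)
    (hq : ∀ t, HasDerivAt q ((z t * q t - x t * w t - α₀) * q t + x t * y t) t)
    (hcon : ∀ t : ℝ, y t - w t * q t = Complex.exp (-(t : ℂ)))
    (Q₁ P₁ Q₂ P₂ S : ℝ → ℂ)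
    (hQ₁ : ∀ t, Q₁ t = w t)
    (hP₁ : ∀ t, P₁ t = x t)
    (hQ₂ : ∀ t, Q₂ t = Complex.exp (t : ℂ) * q t)
    (hP₂ : ∀ t, P₂ t = z t * Complex.exp (-(t : ℂ)))
    (hS : ∀ t, S t = Complex.exp (-(t : ℂ))) :
    (∀ t, HasDerivAt Q₁
      (-(S t) * (-(Q₁ t)^2 * P₁ t / S t + α₂ * Q₁ t / S t - P₂ t / S t)) t) ∧
    (∀ t, HasDerivAt P₁
      (-(S t) * (Q₁ t * (P₁ t)^2 / S t - α₂ * P₁ t / S t - 1/(2 * S t))) t) ∧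
    (∀ t, HasDerivAt Q₂
      (-(S t) * (-(Q₂ t)^2 * P₂ t / S t - (α₁ + α₂) * Q₂ t / S t - P₁ t / S t)) t) ∧
    (∀ t, HasDerivAt P₂
      (-(S t) * (Q₂ t * (P₂ t)^2 / S t + (α₁ + α₂) * P₂ t / S t + η/2)) t) := by
  obtain rfl : Q₁ = w := funext hQ₁
  obtain rfl : P₁ = x := funext hP₁
  obtain rfl : Q₂ = fun s : ℝ => Complex.exp (s : ℂ) * q s := funext hQ₂
  obtain rfl : P₂ = fun s : ℝ => z s * Complex.exp (-(s : ℂ)) := funext hP₂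
  obtain rfl : S = fun s : ℝ => Complex.exp (-(s : ℂ)) := funext hS
  obtain rfl : α₂ = 1 - α₀ - α₁ := by linear_combination hα
  have hS0 : ∀ t : ℝ, Complex.exp (-(t : ℂ)) ≠ 0 := fun t => Complex.exp_ne_zero _
  have hEinv : ∀ t : ℝ, Complex.exp (t : ℂ) = (Complex.exp (-(t : ℂ)))⁻¹ := by
    intro t
    rw [Complex.exp_neg, inv_inv]
  have hyy : ∀ t : ℝ, y t = Q₁ t * q t + Complex.exp (-(t : ℂ)) := by
    intro t; linear_combination hcon t
  refine ⟨?_, ?_, ?_, ?_⟩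
  · intro t
    convert hw t using 1
    rw [hyy t]
    field_simp
    ring
  · intro t
    convert hx t using 1
    field_simp
    ring
  · intro t
    have hexp : HasDerivAt (fun s : ℝ => Complex.exp (s : ℂ)) (Complex.exp (t : ℂ)) t :=
      (Complex.hasDerivAt_exp (t : ℂ)).comp_ofReal
    refine (hexp.mul (hq t)).congr_deriv ?_
    rw [hyy t]
    simp only [hEinv t]
    field_simp
    ring
  · intro t
    have hexp : HasDerivAt (fun s : ℝ => Complex.exp (-(s : ℂ)))
        (-Complex.exp (-(t : ℂ))) t := by
      have h1 : HasDerivAt (fun s : ℂ => Complex.exp (-s))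
          (Complex.exp (-(t : ℂ)) * (-1)) (t : ℂ) :=
        (Complex.hasDerivAt_exp (-(t : ℂ))).comp (t : ℂ) (hasDerivAt_neg _)
      simpa using h1.comp_ofReal
    refine ((hz t).mul hexp).congr_deriv ?_
    simp only [hEinv t]
    field_simp
    ring
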